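/- If Δ ≥ 1 and q ≥ 2Δ + 1, then for every coloring σ ∈ [q]^V (proper or not) and every proper coloring τ ∈ [q]^V of G, there exists an integer t ≥ 1 such that P^t(σ, τ) > 0; that is, any proper coloring can be reached by the Local Glauber dynamics from any coloring. -/

import Mathlib

open Finset

attribute [local instance] Classical.propDecidable

namespace LocalGlauber

variable {V : Type*} [Fintype V] [DecidableEq V]

/-- A coloring is proper if adjacent vertices get different colors. -/
def IsProper (G : SimpleGraph V) {q : ℕ} (σ : V → Fin q) : Prop :=
  ∀ ⦃x y : V⦄, G.Adj x y → σ x ≠ σ y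

/-- The acceptance condition of the Local Glauber dynamics at node `v`, given the
current coloring `σ` and the proposals `c` (with `c u = σ u` for unmarked nodes):
`c v ∉ ⋃_{u ∈ N(v)} {σ u, c u}` and `c u ∉ {σ v, c v}` for every neighbor `u`. -/
def Accept (G : SimpleGraph V) {q : ℕ} (σ c : V → Fin q) (v : V) : Prop :=
  ∀ u : V, G.Adj v u → c v ≠ σ u ∧ c v ≠ c u ∧ c u ≠ σ v ∧ c u ≠ c v

/-- One step of the Local Glauber dynamics, given proposals `c`
(nodes with `c v = σ v`, in particular unmarked nodes, never change state). -/
noncomputable def glauberStep (G : SimpleGraph V) {q : ℕ} (σ c : V → Fin q) : V → Fin q :=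
  fun v => if Accept G σ c v then c v else σ v

/-- Probability weight of the random choice `(m, c)`: each node is marked (`m v = true`)
independently with probability `γ`; a marked node proposes a uniform color in `[q]`;
an unmarked node proposes its current color. -/
noncomputable def glauberWeight {q : ℕ} (γ : ℝ) (σ : V → Fin q) (m : V → Bool)
    (c : V → Fin q) : ℝ :=
  ∏ v : V, (if m v then γ / q else if c v = σ v then 1 - γ else 0)

/-- Transition matrix of the Local Glauber dynamics. -/
noncomputable def P (G : SimpleGraph V) (q : ℕ) (γ : ℝ) (σ τ : V → Fin q) : ℝ :=
  ∑ m : V → Bool, ∑ c : V → Fin q,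
    if glauberStep G σ c = τ then glauberWeight γ σ m c else 0

/-- `t`-step iterate of the transition matrix. -/
noncomputable def Pt (G : SimpleGraph V) (q : ℕ) (γ : ℝ) : ℕ → (V → Fin q) → (V → Fin q) → ℝ
  | 0 => fun σ τ => if σ = τ then 1 else 0
  | t + 1 => fun σ τ => ∑ ρ : V → Fin q, Pt G q γ t σ ρ * P G q γ ρ τ

/-- Uniform distribution over the proper `q`-colorings of `G`. -/
noncomputable def uniformProper (G : SimpleGraph V) (q : ℕ) (σ : V → Fin q) : ℝ :=
  if IsProper G σ then
    1 / ((univ.filter (fun τ : V → Fin q => IsProper G τ)).card : ℝ)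
  else 0

/-- Total variation distance between two distributions on a finite set. -/
noncomputable def dTV {Ω : Type*} [Fintype Ω] (μ ν : Ω → ℝ) : ℝ :=
  (1 / 2) * ∑ x : Ω, |μ x - ν x|

end LocalGlauber

section AuxProof

open LocalGlauber Finset

variable {V : Type*} [Fintype V] [DecidableEq V]

private lemma weight_nonneg {q : ℕ} {γ : ℝ} (hγ0 : 0 ≤ γ) (hγ1 : γ ≤ 1)
    (σ : V → Fin q) (m : V → Bool) (c : V → Fin q) :
    0 ≤ glauberWeight γ σ m c := by
  unfold glauberWeight
  apply Finset.prod_nonneg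
  intro v _
  split
  · exact div_nonneg hγ0 (Nat.cast_nonneg q)
  · split
    · linarith
    · exact le_refl 0

private lemma P_nonneg (G : SimpleGraph V) (q : ℕ) {γ : ℝ} (hγ0 : 0 ≤ γ) (hγ1 : γ ≤ 1)
    (σ τ : V → Fin q) : 0 ≤ P G q γ σ τ := by
  unfold P
  apply Finset.sum_nonneg; intro m _
  apply Finset.sum_nonneg; intro c _
  split
  · exact weight_nonneg hγ0 hγ1 σ m c
  · exact le_refl 0

private lemma Pt_nonneg (G : SimpleGraph V) (q : ℕ) {γ : ℝ} (hγ0 : 0 ≤ γ) (hγ1 : γ ≤ 1)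
    (t : ℕ) (σ τ : V → Fin q) : 0 ≤ Pt G q γ t σ τ := by
  induction t generalizing σ τ with
  | zero =>
    unfold Pt; split
    · exact zero_le_one
    · exact le_refl 0
  | succ t ih =>
    unfold Pt
    apply Finset.sum_nonneg; intro ρ _
    exact mul_nonneg (ih σ ρ) (P_nonneg G q hγ0 hγ1 ρ τ)

private lemma Pt_one (G : SimpleGraph V) (q : ℕ) (γ : ℝ) (σ τ : V → Fin q) :
    Pt G q γ 1 σ τ = P G q γ σ τ := by
  show (∑ ρ : V → Fin q, Pt G q γ 0 σ ρ * P G q γ ρ τ) = P G q γ σ τ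
  unfold Pt
  simp [ite_mul, Finset.sum_ite_eq]

private lemma P_step_pos (G : SimpleGraph V) {q : ℕ} {γ : ℝ} (hγ0 : 0 < γ) (hγ1 : γ < 1)
    (hq : 0 < q) (σ c : V → Fin q) :
    0 < P G q γ σ (glauberStep G σ c) := by
  have hqr : (0 : ℝ) < q := by exact_mod_cast hq
  have hterm : ∀ m : V → Bool,
      0 ≤ ∑ c' : V → Fin q,
        if glauberStep G σ c' = glauberStep G σ c then glauberWeight γ σ m c' else 0 := by
    intro m
    apply Finset.sum_nonneg; intro c' _
    split
    · exact weight_nonneg hγ0.le hγ1.le σ m c'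
    · exact le_refl 0
  have hwpos : 0 < glauberWeight γ σ (fun _ => true) c := by
    unfold glauberWeight
    apply Finset.prod_pos
    intro v _
    rw [if_pos (rfl : ((fun _ : V => true) v) = true)]
    exact div_pos hγ0 hqr
  have h1 : 0 < ∑ c' : V → Fin q,
      if glauberStep G σ c' = glauberStep G σ c then glauberWeight γ σ (fun _ => true) c' else 0 := by
    have hle : (if glauberStep G σ c = glauberStep G σ c then glauberWeight γ σ (fun _ => true) c else 0)
        ≤ ∑ c' : V → Fin q,
          if glauberStep G σ c' = glauberStep G σ c then glauberWeight γ σ (fun _ => true) c' else 0 := by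
      apply Finset.single_le_sum (f := fun c' =>
        if glauberStep G σ c' = glauberStep G σ c then glauberWeight γ σ (fun _ => true) c' else 0)
      · intro c' _
        split
        · exact weight_nonneg hγ0.le hγ1.le σ _ c'
        · exact le_refl 0
      · exact Finset.mem_univ c
    rw [if_pos rfl] at hle
    exact lt_of_lt_of_le hwpos hle
  unfold P
  refine lt_of_lt_of_le h1 ?_
  exact Finset.single_le_sum (fun m _ => hterm m) (Finset.mem_univ (fun _ => true))

private lemma reach_succ (G : SimpleGraph V) {q : ℕ} {γ : ℝ} (hγ0 : 0 < γ) (hγ1 : γ < 1)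
    {σ ρ τ : V → Fin q} (h : ∃ t : ℕ, 1 ≤ t ∧ 0 < Pt G q γ t σ ρ)
    (hP : 0 < P G q γ ρ τ) : ∃ t : ℕ, 1 ≤ t ∧ 0 < Pt G q γ t σ τ := by
  obtain ⟨t, ht1, ht⟩ := h
  refine ⟨t + 1, by omega, ?_⟩
  show 0 < ∑ x : V → Fin q, Pt G q γ t σ x * P G q γ x τ
  refine lt_of_lt_of_le (mul_pos ht hP) ?_
  exact Finset.single_le_sum
    (fun x _ => mul_nonneg (Pt_nonneg G q hγ0.le hγ1.le t σ x) (P_nonneg G q hγ0.le hγ1.le x τ))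
    (Finset.mem_univ ρ)

/-- A single-vertex move: if recoloring `v` to `b` is locally valid, the step realizes it. -/
private lemma glauberStep_update (G : SimpleGraph V) {q : ℕ} (x : V → Fin q) (v : V) (b : Fin q)
    (h : ∀ u, G.Adj v u → x u ≠ b ∧ x u ≠ x v) :
    glauberStep G x (Function.update x v b) = Function.update x v b := by
  funext w
  by_cases hw : w = v
  · subst hw
    have hacc : Accept G x (Function.update x w b) w := by
      intro u hu
      have huw : u ≠ w := (G.ne_of_adj hu).symm
      rw [Function.update_self, Function.update_of_ne huw]
      exact ⟨(h u hu).1.symm, (h u hu).1.symm, (h u hu).2, (h u hu).1⟩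
    unfold glauberStep
    rw [if_pos hacc]
  · unfold glauberStep
    rw [Function.update_of_ne hw]
    split <;> rfl

/-- A full update: if `c` is proper and cross-proper with `σ`, everyone accepts. -/
private lemma glauberStep_full (G : SimpleGraph V) {q : ℕ} (σ c : V → Fin q)
    (hpr : ∀ ⦃v u⦄, G.Adj v u → c v ≠ c u) (hcr : ∀ ⦃v u⦄, G.Adj v u → c v ≠ σ u) :
    glauberStep G σ c = c := by
  funext v
  have hacc : Accept G σ c v := fun u hu =>
    ⟨hcr hu, hpr hu, hcr hu.symm, hpr hu.symm⟩
  unfold glauberStep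
  rw [if_pos hacc]

/-- Greedy existence of a coloring avoiding, at each vertex `v`, the colors of its
neighbors already processed (the suffix `s`), the `A`-colors of processed neighbors,
and the `B`-colors of unprocessed vertices. -/
private lemma greedy_exists (G : SimpleGraph V) {q : ℕ} (A B : V → Fin q)
    (hcard : ∀ v : V, 2 * (univ.filter (fun u => G.Adj v u)).card < q) :
    ∀ l : List V, l.Nodup → ∃ g : V → Fin q,
      (∀ v, v ∉ l → g v = B v) ∧
      ∀ p v s, l = p ++ v :: s → ∀ u, G.Adj v u →
        (u ∈ s → g v ≠ g u ∧ g v ≠ A u) ∧ (u ∉ s → u ≠ v → g v ≠ B u) := by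
  intro l
  induction l with
  | nil =>
    intro _
    refine ⟨B, fun v _ => rfl, fun p v s hps => ?_⟩
    exact absurd hps (by cases p <;> simp)
  | cons v l' ih =>
    intro hnd
    obtain ⟨hv, hnd'⟩ := List.nodup_cons.mp hnd
    obtain ⟨g', hg'1, hg'2⟩ := ih hnd'
    set S : Finset (Fin q) :=
      (univ.filter (fun u => G.Adj v u)).image g' ∪
      ((univ.filter (fun u => G.Adj v u ∧ u ∈ l')).image A) with hSdef
    have hScard : S.card < q := by
      have h1 : S.card ≤ ((univ.filter (fun u => G.Adj v u)).image g').card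
          + ((univ.filter (fun u => G.Adj v u ∧ u ∈ l')).image A).card :=
        Finset.card_union_le _ _
      have h2 : ((univ.filter (fun u => G.Adj v u)).image g').card
          ≤ (univ.filter (fun u => G.Adj v u)).card := Finset.card_image_le
      have h3 : ((univ.filter (fun u => G.Adj v u ∧ u ∈ l')).image A).card
          ≤ (univ.filter (fun u => G.Adj v u ∧ u ∈ l')).card := Finset.card_image_le
      have h4 : (univ.filter (fun u => G.Adj v u ∧ u ∈ l')).card
          ≤ (univ.filter (fun u => G.Adj v u)).card := by
        apply Finset.card_le_card
        intro x hx
        rw [Finset.mem_filter] at hx ⊢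
        exact ⟨hx.1, hx.2.1⟩
      have h5 := hcard v
      omega
    have hb : ∃ b : Fin q, b ∉ S := by
      by_contra hcon
      push_neg at hcon
      have hsub : (univ : Finset (Fin q)) ⊆ S := fun b _ => hcon b
      have := Finset.card_le_card hsub
      rw [Finset.card_univ, Fintype.card_fin] at this
      omega
    obtain ⟨b, hbS⟩ := hb
    refine ⟨Function.update g' v b, ?_, ?_⟩
    · intro w hw
      rw [List.mem_cons] at hw
      push_neg at hw
      rw [Function.update_of_ne hw.1]
      exact hg'1 w hw.2
    · intro p w s hps u hadj
      cases p with
      | nil =>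
        rw [List.nil_append, List.cons.injEq] at hps
        obtain ⟨rfl, rfl⟩ := hps
        constructor
        · intro hus
          have huv : u ≠ v := fun h => hv (h ▸ hus)
          rw [Function.update_self, Function.update_of_ne huv]
          constructor
          · intro heq
            exact hbS (Finset.mem_union_left _ (Finset.mem_image.2
              ⟨u, Finset.mem_filter.2 ⟨Finset.mem_univ u, hadj⟩, heq.symm⟩))
          · intro heq
            exact hbS (Finset.mem_union_right _ (Finset.mem_image.2
              ⟨u, Finset.mem_filter.2 ⟨Finset.mem_univ u, hadj, hus⟩, heq.symm⟩))
        · intro hus huw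
          rw [Function.update_self]
          have hgu : g' u = B u := hg'1 u hus
          intro heq
          apply hbS
          apply Finset.mem_union_left
          exact Finset.mem_image.2 ⟨u, Finset.mem_filter.2 ⟨Finset.mem_univ u, hadj⟩,
            by rw [hgu, heq]⟩
      | cons a p' =>
        rw [List.cons_append, List.cons.injEq] at hps
        obtain ⟨rfl, hl'⟩ := hps
        have hwl' : w ∈ l' := hl' ▸ List.mem_append.2 (Or.inr (List.mem_cons_self (a := w) (l := s)))
        have hwv : w ≠ v := fun h => hv (h ▸ hwl')
        have hspec := hg'2 p' w s hl' u hadj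
        rw [Function.update_of_ne hwv]
        constructor
        · intro hus
          have hul' : u ∈ l' := hl' ▸ List.mem_append.2 (Or.inr (List.mem_cons_of_mem w hus))
          have huv : u ≠ v := fun h => hv (h ▸ hul')
          rw [Function.update_of_ne huv]
          exact hspec.1 hus
        · intro hus huw
          exact hspec.2 hus huw

/-- A pass: sequentially recolor the vertices of the suffix `s` of `L` to `target`. -/
private lemma pass_reach (G : SimpleGraph V) {q : ℕ} {γ : ℝ} (hγ0 : 0 < γ) (hγ1 : γ < 1)
    (hq : 0 < q) (L : List V) (hnd : L.Nodup) (target X σ₀ : V → Fin q)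
    (hcond : ∀ p v s, L = p ++ v :: s → ∀ u, G.Adj v u →
      (u ∈ s → target u ≠ target v ∧ target u ≠ X v) ∧
      (u ∉ s → X u ≠ target v ∧ X u ≠ X v)) :
    ∀ s p, L = p ++ s → (∃ t : ℕ, 1 ≤ t ∧ 0 < Pt G q γ t σ₀ X) →
      ∃ t : ℕ, 1 ≤ t ∧ 0 < Pt G q γ t σ₀ (fun w => if w ∈ s then target w else X w) := by
  intro s
  induction s with
  | nil =>
    intro p hp h
    have heq : (fun w => if w ∈ ([] : List V) then target w else X w) = X :=
      funext fun w => if_neg (List.not_mem_nil (a := w))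
    rw [heq]
    exact h
  | cons v s' ih =>
    intro p hp h
    have h' := ih (p ++ [v]) (by rw [hp]; simp) h
    set x' : V → Fin q := (fun w => if w ∈ s' then target w else X w) with hx'def
    have hnd2 : (p ++ v :: s').Nodup := hp ▸ hnd
    have hvs : (v :: s').Nodup := (List.sublist_append_right p (v :: s')).nodup hnd2
    have hv : v ∉ s' := (List.nodup_cons.mp hvs).1
    have hx'v : x' v = X v := by rw [hx'def]; exact if_neg hv
    have hmove : ∀ u, G.Adj v u → x' u ≠ target v ∧ x' u ≠ x' v := by
      intro u hu
      have hc := hcond p v s' hp u hu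
      by_cases hus : u ∈ s'
      · have hh := hc.1 hus
        have hx'u : x' u = target u := by rw [hx'def]; exact if_pos hus
        rw [hx'u, hx'v]
        exact hh
      · have hh := hc.2 hus
        have hx'u : x' u = X u := by rw [hx'def]; exact if_neg hus
        rw [hx'u, hx'v]
        exact hh
    have hstep : glauberStep G x' (Function.update x' v (target v))
        = Function.update x' v (target v) := glauberStep_update G x' v (target v) hmove
    have hP : 0 < P G q γ x' (Function.update x' v (target v)) := by
      rw [← hstep]
      exact P_step_pos G hγ0 hγ1 hq x' _
    have hreach := reach_succ G hγ0 hγ1 h' hP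
    have hfun : Function.update x' v (target v)
        = (fun w => if w ∈ v :: s' then target w else X w) := by
      funext w
      by_cases hw : w = v
      · subst hw
        rw [Function.update_self, if_pos (List.mem_cons_self)]
      · rw [Function.update_of_ne hw, hx'def]
        show (if w ∈ s' then target w else X w) = (if w ∈ v :: s' then target w else X w)
        by_cases hws : w ∈ s'
        · rw [if_pos hws, if_pos (List.mem_cons_of_mem v hws)]
        · rw [if_neg hws, if_neg (by rw [List.mem_cons]; push_neg; exact ⟨hw, hws⟩)]
    rw [hfun] at hreach
    exact hreach

end AuxProof

open LocalGlauber in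
/-- If `Δ ≥ 1` and `q ≥ 2Δ + 1`, then from every coloring `σ` (proper or not)
every proper coloring `τ` is reachable: there is `t ≥ 1` with `P^t(σ, τ) > 0`. -/
theorem local_glauber_irreducible {V : Type*} [Fintype V] [DecidableEq V]
    (G : SimpleGraph V) (q : ℕ) (γ : ℝ) (hγ0 : 0 < γ) (hγ1 : γ < 1)
    (hΔ : 1 ≤ G.maxDegree) (hq : 2 * G.maxDegree + 1 ≤ q)
    (σ τ : V → Fin q) (hτ : IsProper G τ) :
    ∃ t : ℕ, 1 ≤ t ∧ 0 < Pt G q γ t σ τ := by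
  classical
  have hqpos : 0 < q := by omega
  -- degree bound
  have hcard : ∀ v : V, 2 * (Finset.univ.filter (fun u => G.Adj v u)).card < q := by
    intro v
    have h1 : (Finset.univ.filter (fun u => G.Adj v u)) = G.neighborFinset v := by
      ext u
      simp [SimpleGraph.mem_neighborFinset]
    have h2 : (Finset.univ.filter (fun u => G.Adj v u)).card ≤ G.maxDegree := by
      rw [h1]
      exact G.degree_le_maxDegree v
    omega
  set L : List V := Finset.univ.toList with hLdef
  have hLnd : L.Nodup := Finset.nodup_toList _
  have hmemL : ∀ v : V, v ∈ L := fun v => Finset.mem_toList.2 (Finset.mem_univ v)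
  -- first greedy coloring ρ : proper and cross-proper with σ
  obtain ⟨ρ, hρB, hρspec⟩ := greedy_exists G σ σ hcard L hLnd
  have hρcross : ∀ ⦃v u⦄, G.Adj v u → ρ v ≠ σ u := by
    intro v u hadj
    obtain ⟨p, s, hps⟩ := List.append_of_mem (hmemL v)
    by_cases hu : u ∈ s
    · exact ((hρspec p v s hps u hadj).1 hu).2
    · exact (hρspec p v s hps u hadj).2 hu (G.ne_of_adj hadj).symm
  have hρprop : ∀ ⦃v u⦄, G.Adj v u → ρ v ≠ ρ u := by
    intro v u hadj
    obtain ⟨p, s, hps⟩ := List.append_of_mem (hmemL v)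
    by_cases hu : u ∈ s
    · exact ((hρspec p v s hps u hadj).1 hu).1
    · have hup : u ∈ p := by
        have hm := hmemL u
        rw [hps] at hm
        rcases List.mem_append.1 hm with h | h
        · exact h
        · rcases List.mem_cons.1 h with h' | h'
          · exact absurd h'.symm (G.ne_of_adj hadj)
          · exact absurd h' hu
      obtain ⟨p₁, p₂, hp⟩ := List.append_of_mem hup
      have hps' : L = p₁ ++ u :: (p₂ ++ v :: s) := by
        rw [hps, hp]; simp
      have hvmem : v ∈ p₂ ++ v :: s := List.mem_append.2 (Or.inr (List.mem_cons_self (a := v) (l := s)))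
      exact (((hρspec p₁ u _ hps' v hadj.symm).1 hvmem).1).symm
  -- second greedy coloring μ (A = τ, B = ρ)
  obtain ⟨μ, hμB, hμspec⟩ := greedy_exists G τ ρ hcard L hLnd
  -- base: reach ρ in one full-update step
  have hfull : glauberStep G σ ρ = ρ := glauberStep_full G σ ρ hρprop hρcross
  have hbase : ∃ t : ℕ, 1 ≤ t ∧ 0 < Pt G q γ t σ ρ := by
    refine ⟨1, le_refl 1, ?_⟩
    rw [Pt_one]
    rw [← hfull]
    exact P_step_pos G hγ0 hγ1 hqpos σ ρ
  -- pass A: ρ → μ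
  have hcondA : ∀ p v s, L = p ++ v :: s → ∀ u, G.Adj v u →
      (u ∈ s → μ u ≠ μ v ∧ μ u ≠ ρ v) ∧ (u ∉ s → ρ u ≠ μ v ∧ ρ u ≠ ρ v) := by
    intro p v s hps u hadj
    constructor
    · intro hus
      have hvns : v ∉ s := by
        have hnd2 : (p ++ v :: s).Nodup := hps ▸ hLnd
        have hvs : (v :: s).Nodup := (List.sublist_append_right p (v :: s)).nodup hnd2
        exact (List.nodup_cons.mp hvs).1
      constructor
      · exact ((hμspec p v s hps u hadj).1 hus).1.symm
      · obtain ⟨p₂, s₂, hs⟩ := List.append_of_mem hus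
        have hps' : L = (p ++ v :: p₂) ++ u :: s₂ := by rw [hps, hs]; simp
        have hvns₂ : v ∉ s₂ := fun h => hvns (hs ▸ List.mem_append.2
          (Or.inr (List.mem_cons_of_mem u h)))
        have hvnu : v ≠ u := fun h => hvns (h ▸ hus)
        exact (hμspec (p ++ v :: p₂) u s₂ hps' v hadj.symm).2 hvns₂ hvnu
    · intro hus
      constructor
      · exact ((hμspec p v s hps u hadj).2 hus (G.ne_of_adj hadj).symm).symm
      · exact hρprop hadj.symm
  have hA := pass_reach G hγ0 hγ1 hqpos L hLnd μ ρ σ hcondA L [] rfl hbase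
  have hμeq : (fun w => if w ∈ L then μ w else ρ w) = μ :=
    funext fun w => if_pos (hmemL w)
  rw [hμeq] at hA
  -- pass B: μ → τ
  have hcondB : ∀ p v s, L = p ++ v :: s → ∀ u, G.Adj v u →
      (u ∈ s → τ u ≠ τ v ∧ τ u ≠ μ v) ∧ (u ∉ s → μ u ≠ τ v ∧ μ u ≠ μ v) := by
    intro p v s hps u hadj
    constructor
    · intro hus
      exact ⟨(hτ hadj).symm, ((hμspec p v s hps u hadj).1 hus).2.symm⟩
    · intro hus
      have hup : u ∈ p := by
        have hm := hmemL u
        rw [hps] at hm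
        rcases List.mem_append.1 hm with h | h
        · exact h
        · rcases List.mem_cons.1 h with h' | h'
          · exact absurd h'.symm (G.ne_of_adj hadj)
          · exact absurd h' hus
      obtain ⟨p₁, p₂, hp⟩ := List.append_of_mem hup
      have hps' : L = p₁ ++ u :: (p₂ ++ v :: s) := by rw [hps, hp]; simp
      have hvmem : v ∈ p₂ ++ v :: s := List.mem_append.2 (Or.inr (List.mem_cons_self (a := v) (l := s)))
      have hh := (hμspec p₁ u _ hps' v hadj.symm).1 hvmem
      exact ⟨hh.2, hh.1⟩
  have hB := pass_reach G hγ0 hγ1 hqpos L hLnd τ μ σ hcondB L [] rfl hA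
  have hτeq : (fun w => if w ∈ L then τ w else μ w) = τ :=
    funext fun w => if_pos (hmemL w)
  rw [hτeq] at hB
  exact hB
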